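/- Let E be a real inner product space containing two orthonormal vectors (for instance the Euclidean space ℝⁿ with n ≥ 2, or any real Hilbert space of dimension at least 2). Then for every δ ≥ 0 the space E is not δ-tripodal: there exist three points x, y, z in E such that no point m of E is simultaneously δ-between x and y, δ-between y and z, and δ-between x and z. -/

import Mathlib

private lemma stmt7_aux {n a b δ : ℝ} (hδ : 0 ≤ δ) (hn0 : 0 ≤ n)
    (h1 : n ≤ a + δ) (h2 : n ≤ b + δ) (ha : a ≤ n) (hb : b ≤ n)
    (hB : a ^ 2 + b ^ 2 ≤ n ^ 2) : n ≤ 4 * δ := by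
  by_cases hcase : n ≤ δ
  · linarith
  · push_neg at hcase
    have hsa : (n - δ) ^ 2 ≤ a ^ 2 := pow_le_pow_left₀ (by linarith) (by linarith) 2
    have hsb : (n - δ) ^ 2 ≤ b ^ 2 := pow_le_pow_left₀ (by linarith) (by linarith) 2
    nlinarith

/-- a real inner product space containing two orthonormal vectors
is not δ-tripodal for any δ ≥ 0. -/
theorem stmt_7 {E : Type*} [NormedAddCommGroup E] [InnerProductSpace ℝ E]
    (u v : E) (hu : ‖u‖ = 1) (hv : ‖v‖ = 1) (huv : (inner ℝ u v : ℝ) = 0)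
    (δ : ℝ) (hδ : 0 ≤ δ) :
    ∃ x y z : E, ∀ m : E,
      ¬ (dist x m + dist m y ≤ dist x y + δ ∧
         dist y m + dist m z ≤ dist y z + δ ∧
         dist x m + dist m z ≤ dist x z + δ) := by
  set R : ℝ := 19 * δ + 1 with hRdef
  have hR : 0 < R := by positivity
  refine ⟨0, R • u, R • v, ?_⟩
  rintro m ⟨h1, h2, h3⟩
  set a : ℝ := inner ℝ m u with ha
  set b : ℝ := inner ℝ m v with hb
  set n : ℝ := ‖m‖ with hn
  clear_value a b n
  have hn0 : 0 ≤ n := hn ▸ norm_nonneg m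
  have hvu : (inner ℝ v u : ℝ) = 0 := by rw [real_inner_comm]; exact huv
  have huu : (inner ℝ u u : ℝ) = 1 := by
    rw [real_inner_self_eq_norm_sq, hu]; norm_num
  have hvv : (inner ℝ v v : ℝ) = 1 := by
    rw [real_inner_self_eq_norm_sq, hv]; norm_num
  -- distances
  have dxy : dist (0 : E) (R • u) = R := by
    rw [dist_zero_left, norm_smul, hu, Real.norm_eq_abs, abs_of_pos hR]; ring
  have dxz : dist (0 : E) (R • v) = R := by
    rw [dist_zero_left, norm_smul, hv, Real.norm_eq_abs, abs_of_pos hR]; ring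
  have huv2 : ‖u - v‖ ^ 2 = 2 := by
    rw [norm_sub_sq_real, hu, hv, huv]; norm_num
  have huvle : ‖u - v‖ ≤ 3 / 2 := by
    nlinarith [norm_nonneg (u - v)]
  have dyz : dist (R • u) (R • v) ≤ 3 / 2 * R := by
    rw [dist_eq_norm, ← smul_sub, norm_smul, Real.norm_eq_abs, abs_of_pos hR]
    nlinarith
  -- projection lower bounds
  have key1 : R - a ≤ ‖m - R • u‖ := by
    have h := real_inner_le_norm (R • u - m) u
    rw [inner_sub_left, real_inner_smul_left, huu, hu, mul_one, mul_one] at h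
    rw [← norm_neg (m - R • u)] at *
    simpa [neg_sub, ← ha] using h
  have key2 : R - b ≤ ‖m - R • v‖ := by
    have h := real_inner_le_norm (R • v - m) v
    rw [inner_sub_left, real_inner_smul_left, hvv, hv, mul_one, mul_one] at h
    rw [← norm_neg (m - R • v)] at *
    simpa [neg_sub, ← hb] using h
  -- Bessel-type: a^2 + b^2 ≤ n^2
  have hw : ‖a • u + b • v‖ ^ 2 = a ^ 2 + b ^ 2 := by
    rw [norm_add_sq_real, norm_smul, norm_smul, real_inner_smul_left,
      real_inner_smul_right, huv, hu, hv, Real.norm_eq_abs, Real.norm_eq_abs]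
    rw [mul_one, mul_one, sq_abs, sq_abs]; ring
  have hinnerw : (inner ℝ m (a • u + b • v) : ℝ) = a ^ 2 + b ^ 2 := by
    rw [inner_add_right, real_inner_smul_right, real_inner_smul_right, ← ha, ← hb]
    ring
  have hbessel : a ^ 2 + b ^ 2 ≤ n ^ 2 := by
    have h := real_inner_le_norm m (a • u + b • v)
    rw [hinnerw, ← hn] at h
    nlinarith [norm_nonneg (a • u + b • v), sq_nonneg a, sq_nonneg b]
  -- a ≤ n, b ≤ n
  have haln : a ≤ n := by
    have h := real_inner_le_norm m u
    rw [hu, mul_one, ← ha, ← hn] at h; exact h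
  have hbln : b ≤ n := by
    have h := real_inner_le_norm m v
    rw [hv, mul_one, ← hb, ← hn] at h; exact h
  -- from h1, h3 : n ≤ a + δ, n ≤ b + δ
  have hRu : ‖R • u‖ = R := by
    rw [norm_smul, hu, Real.norm_eq_abs, abs_of_pos hR]; ring
  have hRv : ‖R • v‖ = R := by
    rw [norm_smul, hv, Real.norm_eq_abs, abs_of_pos hR]; ring
  have h1' : n ≤ a + δ := by
    have h1'' : ‖m‖ + ‖m - R • u‖ ≤ ‖R • u‖ + δ := by
      simpa [dist_zero_left, dist_eq_norm] using h1
    rw [hRu, ← hn] at h1''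
    linarith [key1, h1'']
  have h3' : n ≤ b + δ := by
    have h3'' : ‖m‖ + ‖m - R • v‖ ≤ ‖R • v‖ + δ := by
      simpa [dist_zero_left, dist_eq_norm] using h3
    rw [hRv, ← hn] at h3''
    linarith [key2, h3'']
  -- so n ≤ 4δ
  have hn4 : n ≤ 4 * δ := stmt7_aux hδ hn0 h1' h3' haln hbln hbessel
  -- triangle: ‖m - R•u‖ ≥ R - n, etc.
  have t1 : R - n ≤ ‖m - R • u‖ := by
    have := norm_sub_norm_le (R • u) m
    rw [← norm_neg (R • u - m), neg_sub] at this
    linarith [this, hRu.le, hRu.ge]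
  have t2 : R - n ≤ ‖m - R • v‖ := by
    have := norm_sub_norm_le (R • v) m
    rw [← norm_neg (R • v - m), neg_sub] at this
    linarith [this, hRv.le, hRv.ge]
  -- h2 gives contradiction
  rw [dist_eq_norm, dist_eq_norm, ← norm_neg (R • u - m), neg_sub] at h2
  have : 2 * R - 2 * n ≤ 3 / 2 * R + δ := by linarith [dyz]
  linarith [hRdef.ge, hRdef.le]
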